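/- For every σ > 0, every d ≥ 1, every N ≥ 1, and every choice of pairwise distinct points v₁, …, v_N ∈ ℝ^d, the N×N matrix B with entries B_{ij} = 1/(1 + σ²‖v_i − v_j‖²) is symmetric and positive definite: B_{ij} = B_{ji} for all i, j, and wᵀ B w > 0 for every nonzero w ∈ ℝ^N. -/

import Mathlib

open Real MeasureTheory Set
open scoped BigOperators RealInnerProductSpace

/-- PSD of the kernel `(x,y) ↦ ⟪x,y⟫ ^ n`. -/
lemma rbf_psd_inner_pow {d : ℕ} {ι : Type*} [Fintype ι]
    (x : ι → EuclideanSpace ℝ (Fin d)) (a : ι → ℝ) (n : ℕ) :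
    0 ≤ ∑ i, ∑ j, a i * a j * (⟪x i, x j⟫) ^ n := by
  classical
  have key : ∀ i j : ι, (⟪x i, x j⟫) ^ n =
      ∑ f ∈ Fintype.piFinset (fun _ : Fin n => (Finset.univ : Finset (Fin d))),
        (∏ m, x i (f m)) * (∏ m, x j (f m)) := by
    intro i j
    have h1 : ⟪x i, x j⟫ = ∑ k, x i k * x j k := by
      simp [PiLp.inner_apply, RCLike.inner_apply, mul_comm]
    have h2 : (⟪x i, x j⟫) ^ n = ∏ _m : Fin n, (∑ k, x i k * x j k) := by
      rw [h1, Finset.prod_const, Finset.card_univ, Fintype.card_fin]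
    rw [h2, Finset.prod_univ_sum]
    exact Finset.sum_congr rfl fun f _ => by rw [Finset.prod_mul_distrib]
  set F := Fintype.piFinset (fun _ : Fin n => (Finset.univ : Finset (Fin d))) with hF
  have heq : ∑ i, ∑ j, a i * a j * (⟪x i, x j⟫) ^ n =
      ∑ f ∈ F, (∑ i, a i * ∏ m, x i (f m)) ^ 2 :=
    calc ∑ i, ∑ j, a i * a j * (⟪x i, x j⟫) ^ n
        = ∑ i, ∑ j, ∑ f ∈ F, a i * a j * ((∏ m, x i (f m)) * (∏ m, x j (f m))) := by
          refine Finset.sum_congr rfl fun i _ => Finset.sum_congr rfl fun j _ => ?_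
          rw [key i j, Finset.mul_sum]
      _ = ∑ i, ∑ f ∈ F, ∑ j, a i * a j * ((∏ m, x i (f m)) * (∏ m, x j (f m))) :=
          Finset.sum_congr rfl fun i _ => Finset.sum_comm
      _ = ∑ f ∈ F, ∑ i, ∑ j, a i * a j * ((∏ m, x i (f m)) * (∏ m, x j (f m))) :=
          Finset.sum_comm
      _ = ∑ f ∈ F, (∑ i, a i * ∏ m, x i (f m)) ^ 2 := by
          refine Finset.sum_congr rfl fun f _ => ?_
          rw [sq, Finset.sum_mul_sum]
          exact Finset.sum_congr rfl fun i _ => Finset.sum_congr rfl fun j _ => by ring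
  rw [heq]
  exact Finset.sum_nonneg fun f _ => sq_nonneg _

/-- PSD of the kernel `(x,y) ↦ exp (c * ⟪x,y⟫)` for `c ≥ 0`. -/
lemma rbf_psd_exp_inner {d : ℕ} {ι : Type*} [Fintype ι] (c : ℝ) (hc : 0 ≤ c)
    (x : ι → EuclideanSpace ℝ (Fin d)) (a : ι → ℝ) :
    0 ≤ ∑ i, ∑ j, a i * a j * Real.exp (c * ⟪x i, x j⟫) := by
  classical
  have hexp : ∀ y : ℝ, Real.exp y = ∑' m : ℕ, y ^ m / (m.factorial : ℝ) := by
    intro y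
    rw [Real.exp_eq_exp_ℝ, NormedSpace.exp_eq_tsum_div]
  rw [← Fintype.sum_prod_type']
  have hsummable : ∀ p : ι × ι, Summable (fun m : ℕ =>
      a p.1 * a p.2 * ((c * ⟪x p.1, x p.2⟫) ^ m / (m.factorial : ℝ))) :=
    fun p => (Real.summable_pow_div_factorial _).mul_left _
  have h1 : ∑ p : ι × ι, a p.1 * a p.2 * Real.exp (c * ⟪x p.1, x p.2⟫)
      = ∑' m : ℕ, ∑ p : ι × ι, a p.1 * a p.2 * ((c * ⟪x p.1, x p.2⟫) ^ m / (m.factorial : ℝ)) := by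
    rw [Summable.tsum_finsetSum (fun p _ => hsummable p)]
    refine Finset.sum_congr rfl fun p _ => ?_
    rw [hexp, ← tsum_mul_left]
  rw [h1]
  refine tsum_nonneg fun m => ?_
  have h2 : ∑ p : ι × ι, a p.1 * a p.2 * ((c * ⟪x p.1, x p.2⟫) ^ m / (m.factorial : ℝ))
      = (c ^ m / (m.factorial : ℝ)) * ∑ i, ∑ j, a i * a j * (⟪x i, x j⟫) ^ m := by
    rw [Fintype.sum_prod_type, Finset.mul_sum]
    refine Finset.sum_congr rfl fun i _ => ?_
    rw [Finset.mul_sum]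
    refine Finset.sum_congr rfl fun j _ => ?_
    rw [mul_pow]
    ring
  rw [h2]
  exact mul_nonneg (by positivity) (rbf_psd_inner_pow x a m)

/-- Strict positive definiteness of the kernel `(x,y) ↦ exp (c * ⟪x,y⟫)` for `c > 0`
at pairwise distinct points. -/
lemma rbf_strict_exp_inner {d N : ℕ} (c : ℝ) (hc : 0 < c)
    (v : Fin N → EuclideanSpace ℝ (Fin d)) (hv : Function.Injective v)
    (w : Fin N → ℝ) (hw : w ≠ 0) :
    0 < ∑ i, ∑ j, w i * w j * Real.exp (c * ⟪v i, v j⟫) := by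
  classical
  rcases (rbf_psd_exp_inner c hc.le v w).lt_or_eq with h | h
  · exact h
  exfalso
  -- From the vanishing of the quadratic form, the function
  -- `x ↦ ∑ i, w i * exp (c * ⟪v i, x⟫)` vanishes identically.
  have hf : ∀ x : EuclideanSpace ℝ (Fin d),
      (∑ i, w i * Real.exp (c * ⟪v i, x⟫)) = 0 := by
    intro x
    set A : ℝ := Real.exp (c * ⟪x, x⟫) with hA_def
    have hA : 0 < A := Real.exp_pos _
    set fx : ℝ := ∑ i, w i * Real.exp (c * ⟪v i, x⟫) with hfx_def
    have key : ∀ s : ℝ, 0 ≤ 2 * s * fx + s ^ 2 * A := by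
      intro s
      have h0 := rbf_psd_exp_inner (ι := Option (Fin N)) c hc.le
        (fun o => o.elim x v) (fun o => o.elim s w)
      have hexpand : ∑ o₁ : Option (Fin N), ∑ o₂ : Option (Fin N),
          (o₁.elim s w) * (o₂.elim s w) *
            Real.exp (c * ⟪o₁.elim x v, o₂.elim x v⟫)
          = s ^ 2 * A + 2 * s * fx +
            ∑ i, ∑ j, w i * w j * Real.exp (c * ⟪v i, v j⟫) := by
        rw [Fintype.sum_option]
        simp only [Option.elim_none, Option.elim_some, Fintype.sum_option]
        rw [Finset.sum_add_distrib]
        have hcomm : ∀ i, ⟪x, v i⟫ = ⟪v i, x⟫ := fun i => real_inner_comm _ _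
        simp_rw [hcomm]
        have e1 : ∑ i, s * w i * Real.exp (c * ⟪v i, x⟫) = s * fx := by
          rw [hfx_def, Finset.mul_sum]
          exact Finset.sum_congr rfl fun i _ => by ring
        have e2 : ∑ i, w i * s * Real.exp (c * ⟪v i, x⟫) = s * fx := by
          rw [hfx_def, Finset.mul_sum]
          exact Finset.sum_congr rfl fun i _ => by ring
        rw [e1, e2, ← hA_def]
        ring
      rw [hexpand, ← h] at h0
      linarith
    have hs := key (-(fx / A))
    have hval : 2 * (-(fx / A)) * fx + (-(fx / A)) ^ 2 * A = -(fx ^ 2 / A) := by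
      field_simp
      ring
    rw [hval] at hs
    have h' : fx ^ 2 / A ≤ 0 := by linarith
    have h2 : fx ^ 2 ≤ 0 := by
      rcases div_nonpos_iff.mp h' with ⟨_, hA'⟩ | ⟨h'', _⟩
      · linarith
      · linarith
    have h3 : fx ^ 2 = 0 := le_antisymm h2 (sq_nonneg fx)
    exact (pow_eq_zero_iff two_ne_zero).mp h3
  -- Dedekind's linear independence of characters
  let χ : Fin N → (Multiplicative (EuclideanSpace ℝ (Fin d)) →* ℝ) := fun i =>
    { toFun := fun m => Real.exp (c * ⟪v i, Multiplicative.toAdd m⟫)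
      map_one' := by simp
      map_mul' := by
        intro y z
        simp only [toAdd_mul]
        rw [inner_add_right, mul_add, Real.exp_add] }
  have hχ : Function.Injective χ := by
    intro i j hij
    apply hv
    have h1 := congrArg (fun F : Multiplicative (EuclideanSpace ℝ (Fin d)) →* ℝ =>
      F (Multiplicative.ofAdd (v i - v j))) hij
    simp only [χ, MonoidHom.coe_mk, OneHom.coe_mk, toAdd_ofAdd] at h1
    have h2 : c * ⟪v i, v i - v j⟫ = c * ⟪v j, v i - v j⟫ := Real.exp_injective h1
    have h3 : ⟪v i - v j, v i - v j⟫ = 0 := by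
      rw [inner_sub_left]
      have := mul_left_cancel₀ hc.ne' h2
      linarith
    have h4 : v i - v j = 0 := by
      rwa [inner_self_eq_zero] at h3
    exact sub_eq_zero.mp h4
  have li : LinearIndependent ℝ (fun i => (χ i : Multiplicative (EuclideanSpace ℝ (Fin d)) → ℝ)) :=
    (linearIndependent_monoidHom (Multiplicative (EuclideanSpace ℝ (Fin d))) ℝ).comp χ hχ
  have hsum : ∑ i, w i • (fun m => (χ i) m : Multiplicative (EuclideanSpace ℝ (Fin d)) → ℝ) = 0 := by
    funext m
    have := hf (Multiplicative.toAdd m)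
    simpa [χ, Finset.sum_apply] using this
  have : ∀ i, w i = 0 := Fintype.linearIndependent_iff.mp li w hsum
  exact hw (funext this)

/-- Strict positive definiteness of the Gaussian kernel at pairwise distinct points. -/
lemma rbf_strict_gaussian {d N : ℕ} (t : ℝ) (ht : 0 < t)
    (v : Fin N → EuclideanSpace ℝ (Fin d)) (hv : Function.Injective v)
    (w : Fin N → ℝ) (hw : w ≠ 0) :
    0 < ∑ i, ∑ j, w i * w j * Real.exp (-(t * ‖v i - v j‖ ^ 2)) := by
  classical
  set w' : Fin N → ℝ := fun i => w i * Real.exp (-(t * ‖v i‖ ^ 2)) with hw'_def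
  have hw' : w' ≠ 0 := by
    intro h
    apply hw
    funext i
    have := congrFun h i
    simp only [hw'_def, Pi.zero_apply] at this
    exact (mul_eq_zero.mp this).resolve_right (Real.exp_ne_zero _)
  have hrw : ∀ i j : Fin N, w i * w j * Real.exp (-(t * ‖v i - v j‖ ^ 2))
      = w' i * w' j * Real.exp ((2 * t) * ⟪v i, v j⟫) := by
    intro i j
    have hn : ‖v i - v j‖ ^ 2 = ‖v i‖ ^ 2 - 2 * ⟪v i, v j⟫ + ‖v j‖ ^ 2 :=
      norm_sub_sq_real _ _
    have hE : Real.exp (-(t * ‖v i - v j‖ ^ 2)) = Real.exp (-(t * ‖v i‖ ^ 2)) *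
        Real.exp (2 * t * ⟪v i, v j⟫) * Real.exp (-(t * ‖v j‖ ^ 2)) := by
      rw [← Real.exp_add, ← Real.exp_add]
      congr 1
      rw [hn]
      ring
    rw [hE]
    simp only [hw'_def]
    ring
  simp_rw [hrw]
  exact rbf_strict_exp_inner (2 * t) (by linarith) v hv w' hw'

/-- `∫ s in Ioi 0, exp (-(b * s)) = 1 / b` for `b > 0`. -/
lemma rbf_integral_exp_neg_mul {b : ℝ} (hb : 0 < b) :
    ∫ s in Ioi (0 : ℝ), Real.exp (-(b * s)) = 1 / b := by
  have hderiv : ∀ s ∈ Ici (0 : ℝ),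
      HasDerivAt (fun u : ℝ => -Real.exp (-(b * u)) / b) (Real.exp (-(b * s))) s := by
    intro s _
    have h1 : HasDerivAt (fun u : ℝ => -(b * u)) (-b) s := by
      have h := ((hasDerivAt_id s).const_mul b).neg
      simp only [mul_one] at h
      exact h
    have h2 := h1.exp
    have h3 : HasDerivAt (fun u : ℝ => -Real.exp (-(b * u)) / b) _ s := (h2.neg).div_const b
    convert h3 using 1
    field_simp
  have hint : IntegrableOn (fun s : ℝ => Real.exp (-(b * s))) (Ioi 0) := by
    have := exp_neg_integrableOn_Ioi 0 hb
    simpa [neg_mul] using this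
  have htend : Filter.Tendsto (fun u : ℝ => -Real.exp (-(b * u)) / b)
      Filter.atTop (nhds 0) := by
    have h1 : Filter.Tendsto (fun u : ℝ => b * u) Filter.atTop Filter.atTop :=
      Filter.Tendsto.const_mul_atTop hb Filter.tendsto_id
    have h2 : Filter.Tendsto (fun u : ℝ => Real.exp (-(b * u))) Filter.atTop (nhds 0) :=
      Real.tendsto_exp_neg_atTop_nhds_zero.comp h1
    have h3 := (h2.neg).div_const b
    simpa using h3
  have := integral_Ioi_of_hasDerivAt_of_tendsto' hderiv hint htend
  rw [this, mul_zero, neg_zero, Real.exp_zero]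
  ring

/-- For `σ > 0`, `d ≥ 1`, `N ≥ 1` and pairwise distinct points `v₁, …, v_N ∈ ℝ^d`,
the inverse quadratic RBF interpolation matrix `B` with
`B_{ij} = 1/(1 + σ²‖v_i − v_j‖²)` is symmetric and positive definite:
`B_{ij} = B_{ji}` and `wᵀ B w > 0` for every nonzero `w ∈ ℝ^N`. -/
theorem inverse_quadratic_rbf_matrix_symm_posDef (σ : ℝ) (hσ : 0 < σ) (d N : ℕ)
    (hd : 1 ≤ d) (hN : 1 ≤ N)
    (v : Fin N → EuclideanSpace ℝ (Fin d)) (hv : Function.Injective v) :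
    (∀ i j : Fin N,
      1 / (1 + σ ^ 2 * ‖v i - v j‖ ^ 2) = 1 / (1 + σ ^ 2 * ‖v j - v i‖ ^ 2)) ∧
    (∀ w : Fin N → ℝ, w ≠ 0 →
      0 < ∑ i, ∑ j, w i * (1 / (1 + σ ^ 2 * ‖v i - v j‖ ^ 2)) * w j) := by
  constructor
  · intro i j
    rw [norm_sub_rev]
  · intro w hw
    classical
    set b : Fin N → Fin N → ℝ := fun i j => 1 + σ ^ 2 * ‖v i - v j‖ ^ 2 with hb_def
    have hb : ∀ i j, 0 < b i j := by
      intro i j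
      have : 0 ≤ σ ^ 2 * ‖v i - v j‖ ^ 2 := by positivity
      simp only [hb_def]
      linarith
    -- integrand
    set g : Fin N → Fin N → ℝ → ℝ :=
      fun i j s => w i * w j * Real.exp (-(b i j * s)) with hg_def
    have hgint : ∀ i j, IntegrableOn (g i j) (Ioi 0) := by
      intro i j
      have h0 : IntegrableOn (fun s : ℝ => Real.exp (-(b i j * s))) (Ioi 0) := by
        have := exp_neg_integrableOn_Ioi 0 (hb i j)
        simpa [neg_mul] using this
      simpa [IntegrableOn, hg_def, mul_assoc] using (h0.const_mul (w i * w j))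
    have hentry : ∀ i j, w i * (1 / (1 + σ ^ 2 * ‖v i - v j‖ ^ 2)) * w j
        = ∫ s in Ioi (0 : ℝ), g i j s := by
      intro i j
      simp only [hg_def]
      rw [MeasureTheory.integral_const_mul, rbf_integral_exp_neg_mul (hb i j)]
      simp only [hb_def]
      ring
    have hswap : ∑ i, ∑ j, w i * (1 / (1 + σ ^ 2 * ‖v i - v j‖ ^ 2)) * w j
        = ∫ s in Ioi (0 : ℝ), ∑ i, ∑ j, g i j s := by
      simp_rw [hentry]
      rw [MeasureTheory.integral_finset_sum]
      · exact Finset.sum_congr rfl fun i _ => by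
          rw [MeasureTheory.integral_finset_sum]
          exact fun j _ => hgint i j
      · exact fun i _ => integrable_finset_sum _ fun j _ => hgint i j
    rw [hswap]
    -- positivity of the integrand on `Ioi 0`
    have hpos : ∀ s ∈ Ioi (0 : ℝ), 0 < ∑ i, ∑ j, g i j s := by
      intro s hs
      have hs' : 0 < s := hs
      have ht : 0 < σ ^ 2 * s := by positivity
      have hG := rbf_strict_gaussian (σ ^ 2 * s) ht v hv w hw
      have hrw : ∀ i j : Fin N, g i j s
          = Real.exp (-s) * (w i * w j * Real.exp (-(σ ^ 2 * s * ‖v i - v j‖ ^ 2))) := by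
        intro i j
        simp only [hg_def, hb_def]
        have hE : Real.exp (-((1 + σ ^ 2 * ‖v i - v j‖ ^ 2) * s))
            = Real.exp (-s) * Real.exp (-(σ ^ 2 * s * ‖v i - v j‖ ^ 2)) := by
          rw [← Real.exp_add]
          congr 1
          ring
        rw [hE]
        ring
      simp_rw [hrw, ← Finset.mul_sum]
      exact mul_pos (Real.exp_pos _) hG
    have hginteg : IntegrableOn (fun s => ∑ i, ∑ j, g i j s) (Ioi 0) :=
      integrable_finset_sum _ fun i _ => integrable_finset_sum _ fun j _ => hgint i j
    have hnonneg : 0 ≤ᵐ[volume.restrict (Ioi (0:ℝ))] fun s => ∑ i, ∑ j, g i j s := by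
      filter_upwards [ae_restrict_mem measurableSet_Ioi] with s hs
      exact (hpos s hs).le
    rw [show (0:ℝ) = 0 from rfl]
    have := (setIntegral_pos_iff_support_of_nonneg_ae hnonneg hginteg).mpr ?_
    · exact this
    · have hsub : Ioi (0:ℝ) ⊆ Function.support (fun s => ∑ i, ∑ j, g i j s) :=
        fun s hs => (hpos s hs).ne'
      have : Function.support (fun s => ∑ i, ∑ j, g i j s) ∩ Ioi 0 = Ioi 0 :=
        inter_eq_self_of_subset_right hsub
      rw [this]
      simp [Real.volume_Ioi]
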